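/- Let K be a field, let q ∈ K be invertible, let n ≥ 2, and let H(B_n) be the Hecke algebra of type B_n over K with parameters (q, 1). There exists a K-algebra automorphism σ of H(B_n) determined on generators by σ(T_0) = −T_0 and σ(T_i) = T_i for 1 ≤ i ≤ n − 1. Moreover σ is an involution (σ ∘ σ = id), σ(T_0T_1T_0) = T_0T_1T_0, and σ fixes pointwise the subalgebra H(D_n) of H(B_n) generated by {T_0T_1T_0, T_1, …, T_{n−1}}. -/

import Mathlib

open FreeAlgebra

/-- The defining relations of the Hecke algebra of type `B_n` with parameters `(q, 1)`
inside the free `K`-algebra on generators `T_0, …, T_{n-1}`: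
`T_0² = 1`; `(T_i + 1)(T_i − q) = 0` for `1 ≤ i ≤ n−1`;
`T_0T_1T_0T_1 = T_1T_0T_1T_0`; `T_iT_{i+1}T_i = T_{i+1}T_iT_{i+1}` for `1 ≤ i ≤ n−2`;
`T_iT_j = T_jT_i` for `0 ≤ i < j−1 ≤ n−2`. -/
inductive HeckeRel (K : Type*) [Field K] (q : K) (n : ℕ) :
    FreeAlgebra K (Fin n) → FreeAlgebra K (Fin n) → Prop
  | sq_zero (i : Fin n) (hi : (i : ℕ) = 0) :
      HeckeRel K q n (ι K i * ι K i) 1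
  | quad (i : Fin n) (hi : 1 ≤ (i : ℕ)) :
      HeckeRel K q n ((ι K i + 1) * (ι K i - algebraMap K (FreeAlgebra K (Fin n)) q)) 0
  | braid_zero (i j : Fin n) (hi : (i : ℕ) = 0) (hj : (j : ℕ) = 1) :
      HeckeRel K q n (ι K i * ι K j * ι K i * ι K j) (ι K j * ι K i * ι K j * ι K i)
  | braid (i j : Fin n) (hi : 1 ≤ (i : ℕ)) (hj : (j : ℕ) = (i : ℕ) + 1) :
      HeckeRel K q n (ι K i * ι K j * ι K i) (ι K j * ι K i * ι K j)
  | comm (i j : Fin n) (hij : (i : ℕ) + 1 < (j : ℕ)) :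
      HeckeRel K q n (ι K i * ι K j) (ι K j * ι K i)

/-- The Hecke algebra `H(B_n)` of type `B_n` over `K` with parameters `(q, 1)`: the
quotient of the free `K`-algebra on `T_0, …, T_{n-1}` by the two-sided ideal generated
by the defining relations. -/
abbrev HeckeB (K : Type*) [Field K] (q : K) (n : ℕ) : Type _ :=
  RingQuot (HeckeRel K q n)

/-- The generator `T_i` of the Hecke algebra `H(B_n)`. -/
noncomputable def heckeT (K : Type*) [Field K] (q : K) (n : ℕ) (i : Fin n) :
    HeckeB K q n :=
  RingQuot.mkAlgHom K (HeckeRel K q n) (ι K i)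

/-- The element `T_u := T_0 T_1 T_0` of `H(B_n)` (for `n ≥ 2`). -/
noncomputable def heckeTu (K : Type*) [Field K] (q : K) (n : ℕ) (hn : 2 ≤ n) :
    HeckeB K q n :=
  heckeT K q n ⟨0, by omega⟩ * heckeT K q n ⟨1, by omega⟩ * heckeT K q n ⟨0, by omega⟩

/-- The subalgebra `H(D_n)` of `H(B_n)`, generated by `T_u = T_0T_1T_0` and
`T_1, …, T_{n-1}`. -/
noncomputable def heckeD (K : Type*) [Field K] (q : K) (n : ℕ) (hn : 2 ≤ n) :
    Subalgebra K (HeckeB K q n) :=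
  Algebra.adjoin K
    (insert (heckeTu K q n hn) {y | ∃ i : Fin n, 1 ≤ (i : ℕ) ∧ y = heckeT K q n i})


theorem auxSq {R : Type*} [Ring R] (a : R) (h : a*a = 1) : -a * -a = 1 := by
  rw [neg_mul_neg]; exact h
theorem auxBraid {R : Type*} [Ring R] (a b : R) (h : a*b*a*b = b*a*b*a) :
    -a*b*(-a)*b = b*(-a)*b*(-a) := by simp only [neg_mul, mul_neg, neg_neg]; exact h
theorem auxComm {R : Type*} [Ring R] (a b : R) (h : a*b = b*a) : -a*b = b*(-a) := by
  simp only [neg_mul, mul_neg]; exact congrArg Neg.neg h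
theorem auxTu {R : Type*} [Ring R] (a b : R) : -a*b*(-a) = a*b*a := by
  simp only [neg_mul, mul_neg, neg_neg]

section Aux
variable (K : Type*) [Field K] (q : K) (n : ℕ)

noncomputable def sigmaF : FreeAlgebra K (Fin n) →ₐ[K] HeckeB K q n :=
  FreeAlgebra.lift K (fun i => if (i : ℕ) = 0 then -(heckeT K q n i) else heckeT K q n i)

theorem sigmaF_rel {a b : FreeAlgebra K (Fin n)} (h : HeckeRel K q n a b) :
    sigmaF K q n a = sigmaF K q n b := by
  have mkrel : ∀ {a b}, HeckeRel K q n a b →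
      RingQuot.mkAlgHom K (HeckeRel K q n) a = RingQuot.mkAlgHom K (HeckeRel K q n) b :=
    fun h => RingQuot.mkAlgHom_rel K h
  induction h with
  | sq_zero i hi =>
      have h1 := mkrel (HeckeRel.sq_zero i hi)
      simp only [map_mul, map_one] at h1
      simp only [sigmaF, FreeAlgebra.lift_ι_apply, map_mul, map_one, hi, if_true]
      exact auxSq _ h1
  | quad i hi =>
      have h1 := mkrel (HeckeRel.quad i hi)
      simp only [map_mul, map_add, map_sub, map_one, AlgHom.commutes, map_zero] at h1 ⊢
      have hi0 : (i : ℕ) ≠ 0 := by omega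
      simpa [sigmaF, FreeAlgebra.lift_ι_apply, hi0, heckeT] using h1
  | braid_zero i j hi hj =>
      have h1 := mkrel (HeckeRel.braid_zero i j hi hj)
      simp only [map_mul] at h1
      have hj0 : (j : ℕ) ≠ 0 := by omega
      simp only [sigmaF, FreeAlgebra.lift_ι_apply, map_mul, hi, hj0, if_true, if_false]
      exact auxBraid _ _ h1
  | braid i j hi hj =>
      have h1 := mkrel (HeckeRel.braid i j hi hj)
      simp only [map_mul] at h1
      have hi0 : (i : ℕ) ≠ 0 := by omega
      have hj0 : (j : ℕ) ≠ 0 := by omega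
      simpa [sigmaF, FreeAlgebra.lift_ι_apply, hi0, hj0, heckeT] using h1
  | comm i j hij =>
      have h1 := mkrel (HeckeRel.comm i j hij)
      simp only [map_mul] at h1
      have hj0 : (j : ℕ) ≠ 0 := by omega
      by_cases hi0 : (i : ℕ) = 0
      · simp only [sigmaF, FreeAlgebra.lift_ι_apply, map_mul, hi0, hj0, if_true, if_false]
        exact auxComm _ _ h1
      · simpa [sigmaF, FreeAlgebra.lift_ι_apply, hi0, hj0, heckeT] using h1

noncomputable def sigmaHom : HeckeB K q n →ₐ[K] HeckeB K q n :=
  RingQuot.liftAlgHom K ⟨sigmaF K q n, fun _ _ h => sigmaF_rel K q n h⟩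

theorem sigmaHom_T (i : Fin n) :
    sigmaHom K q n (heckeT K q n i) =
      if (i : ℕ) = 0 then -(heckeT K q n i) else heckeT K q n i := by
  simp [sigmaHom, heckeT, RingQuot.liftAlgHom_mkAlgHom_apply, sigmaF,
    FreeAlgebra.lift_ι_apply]

theorem sigmaHom_invol : (sigmaHom K q n).comp (sigmaHom K q n) = AlgHom.id K _ := by
  apply RingQuot.ringQuot_ext'
  apply FreeAlgebra.hom_ext
  funext i
  simp only [Function.comp_apply, AlgHom.coe_comp, AlgHom.coe_id, id_eq]
  show sigmaHom K q n (sigmaHom K q n (heckeT K q n i)) = heckeT K q n i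
  by_cases hi : (i : ℕ) = 0 <;> simp [sigmaHom_T, hi]

end Aux

/-- Let `K` be a field, `q ∈ K` invertible, `n ≥ 2`. There exists a
`K`-algebra automorphism `σ` of `H(B_n)` with `σ T_0 = −T_0` and `σ T_i = T_i` for
`1 ≤ i ≤ n − 1`; moreover `σ` is an involution, `σ (T_0T_1T_0) = T_0T_1T_0`, and `σ`
fixes pointwise the subalgebra `H(D_n)` generated by `{T_0T_1T_0, T_1, …, T_{n−1}}`. -/
theorem stmt10 (K : Type*) [Field K] (q : K) (hq : IsUnit q) (n : ℕ) (hn : 2 ≤ n) :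
    ∃ σ : HeckeB K q n ≃ₐ[K] HeckeB K q n,
      σ (heckeT K q n ⟨0, by omega⟩) = - heckeT K q n ⟨0, by omega⟩ ∧
      (∀ i : Fin n, 1 ≤ (i : ℕ) → σ (heckeT K q n i) = heckeT K q n i) ∧
      (∀ x : HeckeB K q n, σ (σ x) = x) ∧
      σ (heckeTu K q n hn) = heckeTu K q n hn ∧
      ∀ x ∈ heckeD K q n hn, σ x = x := by
  refine ⟨AlgEquiv.ofAlgHom (sigmaHom K q n) (sigmaHom K q n)
    (sigmaHom_invol K q n) (sigmaHom_invol K q n), ?_, ?_, ?_, ?_, ?_⟩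
  · show sigmaHom K q n (heckeT K q n ⟨0, by omega⟩) = - heckeT K q n ⟨0, by omega⟩
    simp [AlgEquiv.ofAlgHom, sigmaHom_T]
  · intro i hi
    have hi0 : (i : ℕ) ≠ 0 := by omega
    show sigmaHom K q n (heckeT K q n i) = heckeT K q n i
    simp [AlgEquiv.ofAlgHom, sigmaHom_T, hi0]
  · intro x
    simpa using congrFun (congrArg DFunLike.coe (sigmaHom_invol K q n)) x
  · show sigmaHom K q n (heckeTu K q n hn) = heckeTu K q n hn
    simp only [heckeTu, map_mul, sigmaHom_T, Fin.val_mk, if_pos rfl, if_neg one_ne_zero]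
    exact auxTu _ _
  · intro x hx
    show sigmaHom K q n x = x
    induction hx using Algebra.adjoin_induction with
    | mem y hy =>
        rcases hy with hy | ⟨i, hi, rfl⟩
        · subst hy
          simp only [heckeTu, map_mul, sigmaHom_T, Fin.val_mk, if_pos rfl, if_neg one_ne_zero]
          exact auxTu _ _
        · have hi0 : (i : ℕ) ≠ 0 := by omega
          simp [sigmaHom_T, hi0]
    | algebraMap r => simp
    | add a b _ _ ha hb => simp [ha, hb]
    | mul a b _ _ ha hb => simp [ha, hb]
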